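/- Let X, Y be real Hilbert spaces, F : B_ρ(x*) → Y Fréchet-differentiable with sup_{x ∈ B_ρ(x*)} ‖F′(x)*‖ = C < ∞, and suppose the strong tangential cone condition ‖F(x) − F(x̃) − F′(x)(x − x̃)‖ ≤ η‖F(x) − F(x̃)‖ holds for all x, x̃ ∈ B_ρ(x*) with some η < 1. Then the least-squares functional J_LS(x) = ½‖F(x) − F(x*)‖² satisfies condition NC(γ,β) for every γ with 0 ≤ γ < (√(1−η²)/(1+√(1−η²)))² and β = −[(1−η²)(1−√γ)² − γ]/(2C²) < 0: that is, for all x₁, x₂ ∈ B_ρ(x*), J_LS(x₁) ≤ γ J_LS(x₂) implies ⟨∇J_LS(x₂), x₂ − x₁⟩ ≥ −β‖∇J_LS(x₂)‖². -/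

import Mathlib

open scoped RealInnerProductSpace
open Metric

/-- Under the strong tangential cone condition with `η < 1` and with
`C` bounding `‖F'(x)*‖` on the ball, the least-squares functional `J_LS(x) = ½‖F x - F x*‖²`
satisfies the condition NC(γ,β) for every `0 ≤ γ < (√(1-η²)/(1+√(1-η²)))²` with
`β = -[(1-η²)(1-√γ)² - γ]/(2C²) < 0`, where `∇J_LS(x) = F'(x)* (F x - F x*)`. -/
private lemma aux_nc_bound (c d CC G t : ℝ) (hc : 0 ≤ c) (hcd : c ≤ d)
    (hCC : 0 < CC) (hG : 0 ≤ G) (hGt : G ≤ CC ^ 2 * t ^ 2) :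
    c / (2 * CC ^ 2) * G ≤ d / 2 * t ^ 2 := by
  have ht : 0 ≤ t ^ 2 := sq_nonneg t
  have h1 : c / (2 * CC ^ 2) * G ≤ c / (2 * CC ^ 2) * (CC ^ 2 * t ^ 2) :=
    mul_le_mul_of_nonneg_left hGt (by positivity)
  have h2 : c / (2 * CC ^ 2) * (CC ^ 2 * t ^ 2) = c / 2 * t ^ 2 := by
    field_simp
  nlinarith

set_option maxHeartbeats 1600000 in
theorem strong_tangential_cone_implies_NC
    {X Y : Type*} [NormedAddCommGroup X] [InnerProductSpace ℝ X] [CompleteSpace X]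
    [NormedAddCommGroup Y] [InnerProductSpace ℝ Y] [CompleteSpace Y]
    (xs : X) (ρ : ℝ) (hρ : 0 < ρ)
    (F : X → Y) (F' : X → X →L[ℝ] Y)
    (hF : ∀ x ∈ closedBall xs ρ, HasFDerivAt F (F' x) x)
    (η : ℝ) (hη1 : η < 1)
    (CC : ℝ) (hCC0 : 0 < CC)
    (hCC : ∀ x ∈ closedBall xs ρ, ‖ContinuousLinearMap.adjoint (F' x)‖ ≤ CC)
    (htcc : ∀ x ∈ closedBall xs ρ, ∀ xt ∈ closedBall xs ρ,
      ‖F x - F xt - F' x (x - xt)‖ ≤ η * ‖F x - F xt‖)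
    (γ : ℝ) (hγ0 : 0 ≤ γ)
    (hγ : γ < (Real.sqrt (1 - η ^ 2) / (1 + Real.sqrt (1 - η ^ 2))) ^ 2) :
    (-(((1 - η ^ 2) * (1 - Real.sqrt γ) ^ 2 - γ) / (2 * CC ^ 2)) < 0) ∧
    (∀ x₁ ∈ closedBall xs ρ, ∀ x₂ ∈ closedBall xs ρ,
      (1 : ℝ) / 2 * ‖F x₁ - F xs‖ ^ 2 ≤ γ * ((1 : ℝ) / 2 * ‖F x₂ - F xs‖ ^ 2) →
      ⟪ContinuousLinearMap.adjoint (F' x₂) (F x₂ - F xs), x₂ - x₁⟫ ≥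
        -(-(((1 - η ^ 2) * (1 - Real.sqrt γ) ^ 2 - γ) / (2 * CC ^ 2))) *
          ‖ContinuousLinearMap.adjoint (F' x₂) (F x₂ - F xs)‖ ^ 2) := by
  set s := Real.sqrt (1 - η ^ 2) with hs
  -- the hypotheses force η² < 1
  have hs0 : 0 < s := by
    rcases lt_or_ge 0 (1 - η ^ 2) with h | h
    · exact Real.sqrt_pos.mpr h
    · exfalso
      have hz : s = 0 := by
        rw [hs, Real.sqrt_eq_zero']; exact h
      rw [hz] at hγ
      norm_num at hγ
      linarith
  have hη2 : 0 < 1 - η ^ 2 := Real.sqrt_pos.mp hs0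
  have hs2 : s ^ 2 = 1 - η ^ 2 := Real.sq_sqrt hη2.le
  have hγnn : 0 ≤ Real.sqrt γ := Real.sqrt_nonneg γ
  have hγsq : Real.sqrt γ ^ 2 = γ := Real.sq_sqrt hγ0
  -- √γ < s/(1+s)
  have hsg : Real.sqrt γ < s / (1 + s) := by
    have h1 : 0 ≤ s / (1 + s) := by positivity
    have h2 := Real.sqrt_lt_sqrt hγ0 hγ
    rwa [Real.sqrt_sq h1] at h2
  have hsum : 0 < 1 + s := by linarith
  have h1' : Real.sqrt γ * (1 + s) < s := (lt_div_iff₀ hsum).mp hsg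
  have hγ1 : Real.sqrt γ < 1 := by
    have : s / (1 + s) < 1 := (div_lt_one hsum).mpr (by linarith)
    linarith
  -- key positivity: γ < (1-η²)(1-√γ)²
  have h2' : Real.sqrt γ < s * (1 - Real.sqrt γ) := by nlinarith
  have hkey : γ < (1 - η ^ 2) * (1 - Real.sqrt γ) ^ 2 := by nlinarith
  have hc : 0 < (1 - η ^ 2) * (1 - Real.sqrt γ) ^ 2 - γ := by linarith
  constructor
  · have : 0 < ((1 - η ^ 2) * (1 - Real.sqrt γ) ^ 2 - γ) / (2 * CC ^ 2) := by positivity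
    linarith
  · intro x₁ h₁ x₂ h₂ hJ
    set r₁ := F x₁ - F xs with hr₁
    set r₂ := F x₂ - F xs with hr₂
    set u := F x₂ - F x₁ with hu
    set g := ContinuousLinearMap.adjoint (F' x₂) r₂ with hg
    have hru : u = r₂ - r₁ := by rw [hr₁, hr₂, hu]; abel
    have hr1 : ‖r₁‖ ^ 2 ≤ γ * ‖r₂‖ ^ 2 := by linarith
    -- adjoint identity
    have hadj : ⟪g, x₂ - x₁⟫ = ⟪r₂, (F' x₂) (x₂ - x₁)⟫ :=
      ContinuousLinearMap.adjoint_inner_left _ _ _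
    -- linearization error bound
    have herr : ‖u - (F' x₂) (x₂ - x₁)‖ ≤ η * ‖u‖ := htcc x₂ h₂ x₁ h₁
    have hsplit : ⟪r₂, (F' x₂) (x₂ - x₁)⟫ = ⟪r₂, u⟫ - ⟪r₂, u - (F' x₂) (x₂ - x₁)⟫ := by
      simp only [inner_sub_right]; ring
    have hCS : ⟪r₂, u - (F' x₂) (x₂ - x₁)⟫ ≤ ‖r₂‖ * (η * ‖u‖) :=
      le_trans (real_inner_le_norm _ _)
        (mul_le_mul_of_nonneg_left herr (norm_nonneg _))
    -- polarization
    have hpol : ‖u‖ ^ 2 = ‖r₂‖ ^ 2 - 2 * ⟪r₂, r₁⟫ + ‖r₁‖ ^ 2 := by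
      rw [hru]; rw [@norm_sub_sq_real]
    have hinneru : ⟪r₂, u⟫ = ‖r₂‖ ^ 2 - ⟪r₂, r₁⟫ := by
      rw [hru, inner_sub_right, real_inner_self_eq_norm_sq]
    -- lower bound for the inner product
    have hlow : ⟪g, x₂ - x₁⟫ ≥ (1 - η ^ 2 - γ) / 2 * ‖r₂‖ ^ 2 := by
      rw [hadj, hsplit]
      nlinarith [sq_nonneg (‖u‖ - η * ‖r₂‖), norm_nonneg u, norm_nonneg r₂]
    -- bound the gradient norm
    have hgnorm : ‖g‖ ≤ CC * ‖r₂‖ := by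
      calc ‖g‖ ≤ ‖ContinuousLinearMap.adjoint (F' x₂)‖ * ‖r₂‖ :=
            (ContinuousLinearMap.adjoint (F' x₂)).le_opNorm r₂
        _ ≤ CC * ‖r₂‖ := mul_le_mul_of_nonneg_right (hCC x₂ h₂) (norm_nonneg _)
    clear_value r₁ r₂ u g
    have hg2 : ‖g‖ ^ 2 ≤ CC ^ 2 * ‖r₂‖ ^ 2 := by
      nlinarith [norm_nonneg g, norm_nonneg r₂]
    -- compare constants: c ≤ 1 - η² - γ
    have hcle : (1 - η ^ 2) * (1 - Real.sqrt γ) ^ 2 - γ ≤ 1 - η ^ 2 - γ := by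
      nlinarith [mul_nonneg (mul_nonneg hη2.le hγnn)
        (show (0:ℝ) ≤ 2 - Real.sqrt γ by linarith), hγsq]
    have hrhs : (((1 - η ^ 2) * (1 - Real.sqrt γ) ^ 2 - γ) / (2 * CC ^ 2)) *
        ‖g‖ ^ 2 ≤ (1 - η ^ 2 - γ) / 2 * ‖r₂‖ ^ 2 :=
      aux_nc_bound _ _ _ _ _ hc.le hcle hCC0 (sq_nonneg _) hg2
    rw [neg_neg]
    linarith
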